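/- Let θ > 0 and let λ(n) be a sequence of partitions with at most n parts. Suppose h_n is a sequence of reals with h_n / n → h_0 where h_0 > θ/2, and suppose the quantities S_n = Σ_{i=1}^n λ(n)_i (λ(n)_i + 2h_n - 2θi) satisfy S_n = O(n^2) as n → ∞. Then |λ(n)| = Σ_i λ(n)_i = O(n). -/

import Mathlib

open Filter Asymptotics

theorem stmt4 (θ : ℝ) (hθ : 0 < θ) (lam : ℕ → ℕ → ℕ)
    (hmono : ∀ n, Antitone (lam n)) (hlen : ∀ n i, n ≤ i → lam n i = 0)
    (h : ℕ → ℝ) (h₀ : ℝ) (hh : Tendsto (fun n => h n / n) atTop (nhds h₀))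
    (hh₀ : θ / 2 < h₀)
    (hS : (fun n => ∑ i ∈ Finset.range n,
        (lam n i : ℝ) * ((lam n i : ℝ) + 2 * h n - 2 * θ * (i + 1)))
      =O[atTop] fun n => (n : ℝ) ^ 2) :
    (fun n => ∑ i ∈ Finset.range n, (lam n i : ℝ)) =O[atTop] fun n => (n : ℝ) := by
  set δ : ℝ := (2 * h₀ - θ) / 2 with hδdef
  have hδ : 0 < δ := by simp only [hδdef]; linarith
  clear_value δ
  rw [isBigO_iff] at hS
  obtain ⟨C, hC⟩ := hS
  rw [isBigO_iff]
  refine ⟨C / δ, ?_⟩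
  have hev1 : ∀ᶠ n : ℕ in atTop, (h₀ - δ/4) * n ≤ h n := by
    have := hh.eventually (eventually_ge_nhds (show h₀ - δ/4 < h₀ by linarith))
    filter_upwards [this, eventually_gt_atTop 0] with n hn hn0
    have hn' : (0:ℝ) < n := by exact_mod_cast hn0
    have heq : (h n / n) * n = h n := by field_simp
    nlinarith
  have hgauss : ∀ m : ℕ, ∑ i ∈ Finset.range m, ((i:ℝ)+1) = m*(m+1)/2 := by
    intro m
    induction m with
    | zero => simp
    | succ k ih => rw [Finset.sum_range_succ, ih]; push_cast; ring
  filter_upwards [hC, hev1, eventually_ge_atTop ⌈2*θ/δ⌉₊, eventually_gt_atTop 0]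
    with n hCn hhn hnθ hn0
  have hn' : (0:ℝ) < n := by exact_mod_cast hn0
  have hnθ' : 2*θ/δ ≤ (n:ℝ) := Nat.ceil_le.mp hnθ
  have h2θ : 2*θ ≤ δ * n := by
    rw [div_le_iff₀ hδ] at hnθ'; linarith
  set L : ℝ := ∑ i ∈ Finset.range n, (lam n i : ℝ) with hL
  set A : ℝ := ∑ i ∈ Finset.range n, (lam n i : ℝ) * ((i:ℝ)+1) with hA
  set Q : ℝ := ∑ i ∈ Finset.range n, (lam n i : ℝ)^2 with hQ
  have hL0 : 0 ≤ L := Finset.sum_nonneg fun i _ => by positivity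
  have hQ0 : 0 ≤ Q := Finset.sum_nonneg fun i _ => by positivity
  -- Chebyshev
  have hanti : AntivaryOn (fun i => (lam n i : ℝ)) (fun i => ((i:ℝ)+1)) (Finset.range n) := by
    intro i _ j _ hij
    simp only at hij ⊢
    have hij' : i < j := by exact_mod_cast (by linarith : (i:ℝ) < j)
    exact_mod_cast hmono n hij'.le
  have hcheb := hanti.card_mul_sum_le_sum_mul_sum
  simp only [Finset.card_range, hgauss n] at hcheb
  have hcheb' : (n:ℝ) * A ≤ L * (n*(n+1)/2) := hcheb
  have hA_le : 2 * A ≤ L * ((n:ℝ)+1) := by nlinarith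
  clear_value L A Q
  -- split S
  have hSsplit : ∑ i ∈ Finset.range n, (lam n i : ℝ) * ((lam n i : ℝ) + 2 * h n - 2 * θ * (i + 1))
      = Q + 2 * h n * L - 2 * θ * A := by
    rw [hQ, hL, hA, Finset.mul_sum, Finset.mul_sum, ← Finset.sum_add_distrib,
      ← Finset.sum_sub_distrib]
    exact Finset.sum_congr rfl fun i _ => by ring
  rw [hSsplit] at hCn
  have hnorm2 : ‖(n:ℝ)^2‖ = (n:ℝ)^2 := by
    rw [Real.norm_eq_abs, abs_of_nonneg (sq_nonneg _)]
  rw [hnorm2] at hCn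
  have habs := abs_le.mp hCn
  have hx : (h₀ - δ/4)*(n:ℝ) = θ/2*n + 3*δ/4*n := by rw [hδdef]; ring
  have hhn2 : δ * n ≤ 2 * h n - θ * ((n:ℝ)+1) := by linarith
  have hlow : δ * n * L ≤ Q + 2 * h n * L - 2 * θ * A := by nlinarith
  have hCnn : 0 ≤ C := by
    have h1 : (0:ℝ) ≤ C * (n:ℝ)^2 := le_trans (abs_nonneg _) hCn
    have hn2 : (0:ℝ) < (n:ℝ)^2 := by positivity
    nlinarith
  have hfin : L ≤ C / δ * n := by
    have hδn : 0 < δ * (n:ℝ) := mul_pos hδ hn'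
    rw [← mul_le_mul_iff_right₀ hδn]
    have heq : δ * ↑n * (C / δ * ↑n) = C * (n:ℝ)^2 := by field_simp
    rw [heq]
    linarith [le_trans hlow habs.2]
  rw [Real.norm_eq_abs, Real.norm_eq_abs, abs_of_nonneg hL0, abs_of_pos hn']
  exact hfin
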